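/- arXiv:1011.1340 — 2 statements merged into one kernel-verified Lean document; each statement's English description precedes it below -/
import Mathlib

section
/- Let A₁, A₂, E, P be n×n positive semidefinite complex matrices with A₁ ≤ A₂ (i.e. A₂ − A₁ is positive semidefinite) and E ≤ P. Then for every real s with 0 < s < 1, Tr(A₂^s · E^(1−s)) − Tr(A₁^s · E^(1−s)) ≤ Tr(A₂^s · P^(1−s)) − Tr(A₁^s · P^(1−s)). -/
open Matrix MeasureTheory Set Real intervalIntegral
open scoped ComplexOrder ENNReal

/-- Real power `A ^ r` of a Hermitian matrix, defined via the functional calculus: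
apply `t ↦ t ^ r` (real power, with `0 ^ 0 = 1`) to the eigenvalues in a spectral
decomposition. -/
noncomputable def hermPow {n : ℕ} {A : Matrix (Fin n) (Fin n) ℂ}
    (hA : A.IsHermitian) (r : ℝ) : Matrix (Fin n) (Fin n) ℂ :=
  hA.cfc (fun x : ℝ => x ^ r)

/-- The square root of a positive semidefinite matrix, with its definition from the older
Mathlib (removed since): `U * diagonal (√ ∘ eigenvalues) * U⋆`. -/
noncomputable def Matrix.PosSemidef.sqrt {n 𝕜 : Type*} [Fintype n] [RCLike 𝕜] [DecidableEq n]
    {A : Matrix n n 𝕜} (hA : A.PosSemidef) : Matrix n n 𝕜 :=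
  hA.1.eigenvectorUnitary.1 * diagonal ((↑) ∘ (√·) ∘ hA.1.eigenvalues) *
    (star hA.1.eigenvectorUnitary : Matrix n n 𝕜)

/-- The absolute value `|H|` of a Hermitian matrix: the positive semidefinite
square root of `H ^ 2`. -/
noncomputable def hermAbs {n : ℕ} {H : Matrix (Fin n) (Fin n) ℂ}
    (hH : H.IsHermitian) : Matrix (Fin n) (Fin n) ℂ :=
  Matrix.PosSemidef.sqrt (A := H * H)
    (by simpa only [hH.eq] using Matrix.posSemidef_conjTranspose_mul_self H)

/-- The positive part `H₊ = (|H| + H) / 2` of a Hermitian matrix. -/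
noncomputable def hermPosPart {n : ℕ} {H : Matrix (Fin n) (Fin n) ℂ}
    (hH : H.IsHermitian) : Matrix (Fin n) (Fin n) ℂ :=
  (2 : ℂ)⁻¹ • (hermAbs hH + H)

/-- The negative part `H₋ = (|H| - H) / 2` of a Hermitian matrix. -/
noncomputable def hermNegPart {n : ℕ} {H : Matrix (Fin n) (Fin n) ℂ}
    (hH : H.IsHermitian) : Matrix (Fin n) (Fin n) ℂ :=
  (2 : ℂ)⁻¹ • (hermAbs hH - H)

namespace LH

variable {n : ℕ} {A : Matrix (Fin n) (Fin n) ℂ}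


noncomputable def U (hA : A.IsHermitian) : Matrix (Fin n) (Fin n) ℂ :=
  (hA.eigenvectorUnitary : Matrix (Fin n) (Fin n) ℂ)

noncomputable def D (hA : A.IsHermitian) (f : ℝ → ℝ) : Matrix (Fin n) (Fin n) ℂ :=
  diagonal ((RCLike.ofReal : ℝ → ℂ) ∘ f ∘ hA.eigenvalues)

lemma cfc_eq' (hA : A.IsHermitian) (f : ℝ → ℝ) : hA.cfc f = U hA * D hA f * star (U hA) :=
  rfl

lemma star_U_mul_U (hA : A.IsHermitian) : star (U hA) * U hA = 1 :=
  Unitary.star_mul_self_of_mem hA.eigenvectorUnitary.2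

lemma U_mul_star_U (hA : A.IsHermitian) : U hA * star (U hA) = 1 :=
  Unitary.mul_star_self_of_mem hA.eigenvectorUnitary.2

lemma D_congr (hA : A.IsHermitian) {f g : ℝ → ℝ}
    (h : ∀ i, f (hA.eigenvalues i) = g (hA.eigenvalues i)) : D hA f = D hA g := by
  unfold D
  ext i j
  simp [Matrix.diagonal_apply, h]

lemma cfc_congr (hA : A.IsHermitian) {f g : ℝ → ℝ}
    (h : ∀ i, f (hA.eigenvalues i) = g (hA.eigenvalues i)) : hA.cfc f = hA.cfc g := by
  rw [cfc_eq', cfc_eq', D_congr hA h]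

lemma cfc_herm (hA : A.IsHermitian) (f : ℝ → ℝ) : (hA.cfc f).IsHermitian := by
  have hD : (D hA f)ᴴ = D hA f := by
    unfold D
    rw [diagonal_conjTranspose]
    ext i j
    simp [Matrix.diagonal_apply]
  unfold Matrix.IsHermitian
  rw [cfc_eq', Matrix.star_eq_conjTranspose, conjTranspose_mul, conjTranspose_mul,
    conjTranspose_conjTranspose, hD, mul_assoc]

lemma cfc_mul (hA : A.IsHermitian) (f g : ℝ → ℝ) :
    hA.cfc f * hA.cfc g = hA.cfc (fun x => f x * g x) := by
  have hD : D hA f * D hA g = D hA (fun x => f x * g x) := by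
    unfold D
    rw [diagonal_mul_diagonal]
    ext i j
    simp [Matrix.diagonal_apply]
  rw [cfc_eq', cfc_eq', cfc_eq', ← hD]
  simp only [mul_assoc]
  rw [← mul_assoc (star (U hA)) (U hA), star_U_mul_U, one_mul]

lemma cfc_id (hA : A.IsHermitian) : hA.cfc id = A := by
  rw [cfc_eq']
  exact hA.spectral_theorem.symm

theorem _root_.Matrix.PosSemidef.sqrt_mul_self {B : Matrix (Fin n) (Fin n) ℂ}
    (hB : B.PosSemidef) : hB.sqrt * hB.sqrt = B := by
  have h : hB.sqrt = hB.1.cfc (fun x => √x) := rfl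
  rw [h, cfc_mul]
  conv_rhs => rw [← cfc_id hB.1]
  apply cfc_congr
  intro i
  exact Real.mul_self_sqrt (hB.eigenvalues_nonneg i)

theorem _root_.Matrix.PosSemidef.posSemidef_sqrt {B : Matrix (Fin n) (Fin n) ℂ}
    (hB : B.PosSemidef) : hB.sqrt.PosSemidef := by
  unfold Matrix.PosSemidef.sqrt
  rw [Matrix.star_eq_conjTranspose]
  exact (posSemidef_diagonal_iff.mpr fun i => by simp [Real.sqrt_nonneg]).mul_mul_conjTranspose_same _

lemma cfc_add_const (hA : A.IsHermitian) (f : ℝ → ℝ) (t : ℝ) :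
    hA.cfc (fun x => f x + t) = hA.cfc f + (t : ℂ) • 1 := by
  have hD : D hA (fun x => f x + t) = D hA f + (t : ℂ) • 1 := by
    unfold D
    rw [← diagonal_one, ← diagonal_smul, diagonal_add]
    ext i j
    simp [Matrix.diagonal_apply]
  rw [cfc_eq', cfc_eq', hD, mul_add, add_mul]
  congr 1
  rw [mul_smul_comm, smul_mul_assoc, mul_one, U_mul_star_U]

lemma cfc_sub (hA : A.IsHermitian) (f g : ℝ → ℝ) :
    hA.cfc (fun x => f x - g x) = hA.cfc f - hA.cfc g := by
  have hD : D hA (fun x => f x - g x) = D hA f - D hA g := by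
    unfold D
    rw [diagonal_sub]
    ext i j
    simp [Matrix.diagonal_apply]
  rw [cfc_eq', cfc_eq', cfc_eq', hD, mul_sub, sub_mul]

lemma cfc_one (hA : A.IsHermitian) : hA.cfc (fun _ => 1) = 1 := by
  have hD : D hA (fun _ => 1) = 1 := by
    unfold D
    rw [← diagonal_one]
    ext i j
    simp [Matrix.diagonal_apply]
  rw [cfc_eq', hD, mul_one, U_mul_star_U]




lemma quadForm (hA : A.IsHermitian) (f : ℝ → ℝ) (x : Fin n → ℂ) :
    star x ⬝ᵥ (hA.cfc f *ᵥ x) =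
      ((∑ i, f (hA.eigenvalues i) * Complex.normSq ((star (U hA) *ᵥ x) i) : ℝ) : ℂ) := by
  set y := star (U hA) *ᵥ x with hy
  have h1 : hA.cfc f *ᵥ x = U hA *ᵥ (D hA f *ᵥ y) := by
    rw [cfc_eq', hy]
    simp [mulVec_mulVec, mul_assoc]
  have h2 : star x ⬝ᵥ (U hA *ᵥ (D hA f *ᵥ y)) = star y ⬝ᵥ (D hA f *ᵥ y) := by
    rw [dotProduct_mulVec, hy, star_mulVec, Matrix.star_eq_conjTranspose,
      conjTranspose_conjTranspose]
  rw [h1, h2]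
  unfold D
  simp only [dotProduct, mulVec_diagonal, Function.comp_apply]
  push_cast
  apply Finset.sum_congr rfl
  intro i _
  have : star (y i) * y i = (Complex.normSq (y i) : ℂ) := by
    rw [Complex.star_def, mul_comm, Complex.mul_conj]
  simp only [Pi.star_apply]
  rw [mul_comm (star (y i)), mul_assoc, mul_comm (y i), this]
  rfl



lemma posDef_conj {M S : Matrix (Fin n) (Fin n) ℂ} (hM : M.PosDef) (hS : IsUnit S) :
    (Sᴴ * M * S).PosDef := by
  refine posDef_iff_dotProduct_mulVec.mpr ⟨isHermitian_conjTranspose_mul_mul S hM.1, fun x hx => ?_⟩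
  have h1 : (Sᴴ * M * S) *ᵥ x = Sᴴ *ᵥ (M *ᵥ (S *ᵥ x)) := by
    simp [mulVec_mulVec, mul_assoc]
  have h2 : star x ⬝ᵥ (Sᴴ *ᵥ (M *ᵥ (S *ᵥ x))) = star (S *ᵥ x) ⬝ᵥ (M *ᵥ (S *ᵥ x)) := by
    rw [dotProduct_mulVec, star_mulVec]
  have h3 : S *ᵥ x ≠ 0 := by
    intro h
    apply hx
    have := (mulVec_injective_iff_isUnit.mpr hS)
    apply this
    rw [h, mulVec_zero]
  rw [h1, h2]
  exact (posDef_iff_dotProduct_mulVec.mp hM).2 h3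

/-- For positive definite `B` with `S = sqrt (B⁻¹)`, we have `S * B * S = 1`. -/
lemma sqrt_inv_conj_self {B : Matrix (Fin n) (Fin n) ℂ} (hB : B.PosDef) :
    hB.inv.posSemidef.sqrt * B * hB.inv.posSemidef.sqrt = 1 := by
  set S := hB.inv.posSemidef.sqrt with hS
  have hSS : S * S = B⁻¹ := hB.inv.posSemidef.sqrt_mul_self
  have hBdet : IsUnit B.det := hB.isUnit.map detMonoidHom
  have hSdet : IsUnit S.det := by
    have h2 : S.det * S.det = B⁻¹.det := by rw [← det_mul, hSS]
    have : IsUnit (B⁻¹).det := hB.inv.isUnit.map detMonoidHom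
    rw [← h2] at this
    exact isUnit_of_mul_isUnit_left this
  have hSunit : IsUnit S := (Matrix.isUnit_iff_isUnit_det S).mpr hSdet
  set X := S * B * S with hX
  have hXunit : IsUnit X := (hSunit.mul hB.isUnit).mul hSunit
  have hXX : X * X = X * 1 := by
    rw [mul_one, hX]
    calc S * B * S * (S * B * S) = S * B * (S * S) * B * S := by noncomm_ring
      _ = S * (B * B⁻¹) * B * S := by rw [hSS]; noncomm_ring
      _ = S * B * S := by rw [Matrix.mul_nonsing_inv B hBdet]; noncomm_ring
  exact hXunit.mul_left_cancel hXX

/-- Inverse is antitone on positive definite matrices. -/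
lemma inv_sub_inv_posSemidef {B₁ B₂ : Matrix (Fin n) (Fin n) ℂ}
    (hB₁ : B₁.PosDef) (hB₂ : B₂.PosDef) (h : (B₂ - B₁).PosSemidef) :
    (B₁⁻¹ - B₂⁻¹).PosSemidef := by
  set S := hB₁.inv.posSemidef.sqrt with hSdef
  have hSherm : S.IsHermitian := hB₁.inv.posSemidef.posSemidef_sqrt.1
  have hSS : S * S = B₁⁻¹ := hB₁.inv.posSemidef.sqrt_mul_self
  have hSBS : S * B₁ * S = 1 := sqrt_inv_conj_self hB₁
  have hSdet : IsUnit S.det := by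
    have h2 : S.det * S.det = B₁⁻¹.det := by rw [← det_mul, hSS]
    have : IsUnit (B₁⁻¹).det := hB₁.inv.isUnit.map detMonoidHom
    rw [← h2] at this
    exact isUnit_of_mul_isUnit_left this
  have hSunit : IsUnit S := (Matrix.isUnit_iff_isUnit_det S).mpr hSdet
  set C := S * B₂ * S with hCdef
  have hC : C.PosDef := by
    have := posDef_conj hB₂ hSunit
    rwa [hSherm.eq] at this
  have hC1 : (C - 1).PosSemidef := by
    have hcong := h.conjTranspose_mul_mul_same S
    rw [hSherm.eq] at hcong
    have heq : S * (B₂ - B₁) * S = C - 1 := by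
      rw [Matrix.mul_sub, Matrix.sub_mul, hSBS]
    rwa [heq] at hcong
  -- T := sqrt C⁻¹, 1 - C⁻¹ = T * (C - 1) * T
  set T := hC.inv.posSemidef.sqrt with hTdef
  have hTherm : T.IsHermitian := hC.inv.posSemidef.posSemidef_sqrt.1
  have hTT : T * T = C⁻¹ := hC.inv.posSemidef.sqrt_mul_self
  have hTCT : T * C * T = 1 := sqrt_inv_conj_self hC
  have hkey : (1 - C⁻¹).PosSemidef := by
    have hcong := hC1.conjTranspose_mul_mul_same T
    rw [hTherm.eq] at hcong
    have : T * (C - 1) * T = 1 - C⁻¹ := by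
      rw [Matrix.mul_sub, Matrix.sub_mul, hTCT, mul_one, hTT]
    rwa [this] at hcong
  -- B₁⁻¹ - B₂⁻¹ = S * (1 - C⁻¹) * S
  have hCinv : S * C⁻¹ * S = B₂⁻¹ := by
    rw [hCdef, Matrix.mul_inv_rev, Matrix.mul_inv_rev]
    calc S * (S⁻¹ * (B₂⁻¹ * S⁻¹)) * S = (S * S⁻¹) * B₂⁻¹ * (S⁻¹ * S) := by noncomm_ring
      _ = B₂⁻¹ := by
          rw [Matrix.mul_nonsing_inv S hSdet, Matrix.nonsing_inv_mul S hSdet, one_mul, mul_one]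
  have hfin : S * (1 - C⁻¹) * S = B₁⁻¹ - B₂⁻¹ := by
    rw [Matrix.mul_sub, Matrix.sub_mul, mul_one, hSS, hCinv]
  have hcong := hkey.conjTranspose_mul_mul_same S
  rw [hSherm.eq, hfin] at hcong
  exact hcong



noncomputable def G (s : ℝ) : ℝ → ℝ := fun u => u ^ (s - 1) / (1 + u)

variable {s : ℝ}

lemma G_nonneg (u : ℝ) (hu : 0 < u) : 0 ≤ G s u :=
  div_nonneg (rpow_nonneg hu.le _) (by linarith)

lemma G_measurable : Measurable (G s) := by unfold G; fun_prop

lemma G_integrable (hs0 : 0 < s) (hs1 : s < 1) : IntegrableOn (G s) (Ioi (0:ℝ)) := by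
  have h1 : IntegrableOn (G s) (Ioc (0:ℝ) 1) := by
    have hbase : IntegrableOn (fun u : ℝ => u ^ (s - 1)) (Ioc (0:ℝ) 1) := by
      rw [integrableOn_Ioc_iff_integrableOn_Ioo,
        intervalIntegral.integrableOn_Ioo_rpow_iff one_pos]
      linarith
    apply hbase.mono' G_measurable.aestronglyMeasurable
    filter_upwards [ae_restrict_mem measurableSet_Ioc] with u hu
    have hu0 : 0 < u := hu.1
    rw [Real.norm_eq_abs, abs_of_nonneg (G_nonneg u hu0)]
    calc G s u ≤ u ^ (s-1) / 1 := div_le_div_of_nonneg_left (rpow_nonneg hu0.le _) one_pos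
          (by linarith)
      _ = u ^ (s-1) := div_one _
  have h2 : IntegrableOn (G s) (Ioi (1:ℝ)) := by
    have hbase : IntegrableOn (fun u : ℝ => u ^ (s - 2)) (Ioi (1:ℝ)) :=
      integrableOn_Ioi_rpow_of_lt (by linarith) one_pos
    apply hbase.mono' G_measurable.aestronglyMeasurable
    filter_upwards [ae_restrict_mem measurableSet_Ioi] with u hu
    have hu0 : (0:ℝ) < u := lt_trans one_pos hu
    rw [Real.norm_eq_abs, abs_of_nonneg (G_nonneg u hu0)]
    calc G s u ≤ u ^ (s-1) / u := div_le_div_of_nonneg_left (rpow_nonneg hu0.le _) hu0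
          (by simp at hu; linarith)
      _ = u ^ (s-2) := by
          rw [div_eq_mul_inv, ← Real.rpow_neg_one u, ← Real.rpow_add hu0]
          norm_num
          ring_nf
  have := h1.union h2
  rwa [Set.Ioc_union_Ioi_eq_Ioi (by norm_num : (0:ℝ) ≤ 1)] at this

noncomputable def Cs (s : ℝ) : ℝ := ∫ u in Ioi (0:ℝ), G s u

lemma Cs_pos (hs0 : 0 < s) (hs1 : s < 1) : 0 < Cs s := by
  rw [Cs]
  have hnn : (0:ℝ → ℝ) ≤ᵐ[volume.restrict (Ioi (0:ℝ))] G s :=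
    (ae_restrict_iff' measurableSet_Ioi).mpr (ae_of_all _ fun u hu => G_nonneg u hu)
  rw [setIntegral_pos_iff_support_of_nonneg_ae hnn (G_integrable hs0 hs1)]
  have hsub : Ioi (0:ℝ) ⊆ Function.support (G s) ∩ Ioi 0 := by
    intro u hu
    refine ⟨?_, hu⟩
    have hu' : (0:ℝ) < u := hu
    have : 0 < G s u := div_pos (rpow_pos_of_pos hu' _) (by linarith)
    exact this.ne'
  calc (0:ℝ≥0∞) < volume (Ioi (0:ℝ)) := by simp
    _ ≤ volume (Function.support (G s) ∩ Ioi 0) := measure_mono hsub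

lemma kernel_eq {x : ℝ} (hx0 : 0 < x) {t : ℝ} (ht0 : 0 < t) :
    x ^ (s - 1) * G s (x⁻¹ * t) = x / (x + t) * t ^ (s - 1) := by
  unfold G
  have e1 : (x⁻¹ * t) ^ (s-1) = (x ^ (s-1))⁻¹ * t ^ (s-1) := by
    rw [Real.mul_rpow (inv_nonneg.mpr hx0.le) ht0.le, Real.inv_rpow hx0.le]
  have e2 : 1 + x⁻¹ * t = (x + t) / x := by field_simp
  rw [e1, e2]
  have hxs : x ^ (s-1) ≠ 0 := (rpow_pos_of_pos hx0 _).ne'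
  have hxt : x + t ≠ 0 := by positivity
  field_simp

lemma kernel_integrableOn (hs0 : 0 < s) (hs1 : s < 1) {x : ℝ} (hx : 0 ≤ x) :
    IntegrableOn (fun t : ℝ => x / (x + t) * t ^ (s - 1)) (Ioi (0:ℝ)) := by
  rcases eq_or_lt_of_le hx with h | hx0
  · simp only [← h, zero_div, zero_mul]
    exact integrableOn_zero
  · have hinv : 0 < x⁻¹ := inv_pos.mpr hx0
    have hG : IntegrableOn (fun t : ℝ => G s (x⁻¹ * t)) (Ioi (0:ℝ)) := by
      rw [integrableOn_Ioi_comp_mul_left_iff (G s) 0 hinv, mul_zero]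
      exact G_integrable hs0 hs1
    refine IntegrableOn.congr_fun (hG.const_mul (x ^ (s-1))) ?_ measurableSet_Ioi
    intro t ht
    exact kernel_eq hx0 ht

lemma kernel_integral (hs0 : 0 < s) (hs1 : s < 1) {x : ℝ} (hx : 0 ≤ x) :
    ∫ t in Ioi (0:ℝ), x / (x + t) * t ^ (s - 1) = Cs s * x ^ s := by
  rcases eq_or_lt_of_le hx with h | hx0
  · simp only [← h, zero_div, zero_mul]
    rw [integral_zero, Real.zero_rpow hs0.ne', mul_zero]
  · have hinv : 0 < x⁻¹ := inv_pos.mpr hx0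
    have h1 : ∫ t in Ioi (0:ℝ), x / (x + t) * t ^ (s - 1)
        = ∫ t in Ioi (0:ℝ), x ^ (s-1) * G s (x⁻¹ * t) := by
      apply setIntegral_congr_fun measurableSet_Ioi
      intro t ht
      exact (kernel_eq hx0 ht).symm
    rw [h1, MeasureTheory.integral_const_mul, integral_comp_mul_left_Ioi (G s) 0 hinv, mul_zero]
    simp only [smul_eq_mul, inv_inv]
    rw [← Cs]
    have : x ^ (s-1) * (x * Cs s) = x ^ (s-1) * x ^ (1:ℝ) * Cs s := by
      rw [Real.rpow_one]; ring
    rw [this, ← Real.rpow_add hx0]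
    ring_nf


lemma smul_one_posDef {t : ℝ} (ht : 0 < t) :
    ((t:ℂ) • (1 : Matrix (Fin n) (Fin n) ℂ)).PosDef := by
  rw [smul_one_eq_diagonal]
  exact Matrix.PosDef.diagonal fun i => Complex.zero_lt_real.mpr ht

lemma smul_posSemidef {c : ℝ} (hc : 0 ≤ c) {M : Matrix (Fin n) (Fin n) ℂ}
    (hM : M.PosSemidef) : ((c:ℂ) • M).PosSemidef := by
  refine posSemidef_iff_dotProduct_mulVec.mpr ⟨?_, ?_⟩
  · unfold Matrix.IsHermitian
    rw [conjTranspose_smul, hM.1.eq]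
    congr 1
    simp
  · intro x
    have h := (posSemidef_iff_dotProduct_mulVec.mp hM).2 x
    rw [smul_mulVec, dotProduct_smul, smul_eq_mul]
    rw [Complex.le_def] at h ⊢
    obtain ⟨h1, h2⟩ := h
    simp only [Complex.zero_re, Complex.zero_im] at h1 h2 ⊢
    constructor
    · rw [Complex.mul_re, Complex.ofReal_re, Complex.ofReal_im, zero_mul, sub_zero]
      exact mul_nonneg hc h1
    · rw [Complex.mul_im, Complex.ofReal_re, Complex.ofReal_im, zero_mul, add_zero, ← h2,
        mul_zero]

lemma resolvent_eq {A : Matrix (Fin n) (Fin n) ℂ} (hA : A.PosSemidef) {t : ℝ} (ht : 0 < t) :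
    hA.1.cfc (fun x => x / (x + t)) = 1 - (t:ℂ) • (A + (t:ℂ) • 1)⁻¹ := by
  set B := A + (t:ℂ) • 1 with hBdef
  have hB : B.PosDef := by
    rw [hBdef, add_comm]
    exact (smul_one_posDef ht).add_posSemidef hA
  have hBdet : IsUnit B.det := hB.isUnit.map detMonoidHom
  have hBcfc : B = hA.1.cfc (fun x => x + t) := by
    have := cfc_add_const hA.1 id t
    rw [cfc_id] at this
    rw [hBdef, ← this]
    rfl
  have hmul : hA.1.cfc (fun x => x / (x + t)) * B = A := by
    rw [hBcfc, cfc_mul]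
    have heq : hA.1.cfc (fun x => x / (x + t) * (x + t)) = hA.1.cfc id := by
      apply cfc_congr
      intro i
      have hev : 0 ≤ hA.1.eigenvalues i := hA.eigenvalues_nonneg i
      have : hA.1.eigenvalues i + t ≠ 0 := by positivity
      field_simp
      rfl
    rw [heq, cfc_id]
  have hsol : hA.1.cfc (fun x => x / (x + t)) = A * B⁻¹ := by
    have h2 := congrArg (fun M => M * B⁻¹) hmul
    rw [mul_assoc, Matrix.mul_nonsing_inv B hBdet, mul_one] at h2
    exact h2
  have hfin : (1 : Matrix (Fin n) (Fin n) ℂ) - (t:ℂ) • B⁻¹ = A * B⁻¹ := by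
    have : A = B - (t:ℂ) • 1 := by rw [hBdef]; abel
    rw [this, Matrix.sub_mul, Matrix.mul_nonsing_inv B hBdet, smul_mul_assoc, one_mul]
  rw [hsol, hfin]

lemma resolvent_diff_psd {A₁ A₂ : Matrix (Fin n) (Fin n) ℂ}
    (hA₁ : A₁.PosSemidef) (hA₂ : A₂.PosSemidef) (hd : (A₂ - A₁).PosSemidef)
    {t : ℝ} (ht : 0 < t) :
    (hA₂.1.cfc (fun x => x / (x + t)) - hA₁.1.cfc (fun x => x / (x + t))).PosSemidef := by
  rw [resolvent_eq hA₂ ht, resolvent_eq hA₁ ht]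
  have hB₁ : (A₁ + (t:ℂ) • 1).PosDef := by
    rw [add_comm]; exact (smul_one_posDef ht).add_posSemidef hA₁
  have hB₂ : (A₂ + (t:ℂ) • 1).PosDef := by
    rw [add_comm]; exact (smul_one_posDef ht).add_posSemidef hA₂
  have hdiff : (A₂ + (t:ℂ) • 1 - (A₁ + (t:ℂ) • 1)).PosSemidef := by
    have : A₂ + (t:ℂ) • 1 - (A₁ + (t:ℂ) • 1) = A₂ - A₁ := by abel
    rw [this]; exact hd
  have hinv := inv_sub_inv_posSemidef hB₁ hB₂ hdiff
  have heq : 1 - (t:ℂ) • (A₂ + (t:ℂ) • 1)⁻¹ - (1 - (t:ℂ) • (A₁ + (t:ℂ) • 1)⁻¹)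
      = (t:ℂ) • ((A₁ + (t:ℂ) • 1)⁻¹ - (A₂ + (t:ℂ) • 1)⁻¹) := by
    rw [smul_sub]; abel
  rw [heq]
  exact smul_posSemidef ht.le hinv

lemma rpow_mono {A₁ A₂ : Matrix (Fin n) (Fin n) ℂ} (hA₁ : A₁.PosSemidef) (hA₂ : A₂.PosSemidef)
    (hd : (A₂ - A₁).PosSemidef) {s : ℝ} (hs0 : 0 < s) (hs1 : s < 1) :
    (hA₂.1.cfc (fun x : ℝ => x ^ s) - hA₁.1.cfc (fun x : ℝ => x ^ s)).PosSemidef := by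
  refine posSemidef_iff_dotProduct_mulVec.mpr ⟨(cfc_herm hA₂.1 _).sub (cfc_herm hA₁.1 _), fun x => ?_⟩
  rw [Matrix.sub_mulVec, dotProduct_sub, quadForm, quadForm, ← Complex.ofReal_sub,
    Complex.zero_le_real, sub_nonneg]
  set w₁ : Fin n → ℝ := fun i => Complex.normSq ((star (U hA₁.1) *ᵥ x) i) with hw₁
  set w₂ : Fin n → ℝ := fun i => Complex.normSq ((star (U hA₂.1) *ᵥ x) i) with hw₂
  set l₁ : Fin n → ℝ := hA₁.1.eigenvalues with hl₁
  set l₂ : Fin n → ℝ := hA₂.1.eigenvalues with hl₂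
  have hl₁n : ∀ i, 0 ≤ l₁ i := fun i => hA₁.eigenvalues_nonneg i
  have hl₂n : ∀ i, 0 ≤ l₂ i := fun i => hA₂.eigenvalues_nonneg i
  have hw₁n : ∀ i, 0 ≤ w₁ i := fun i => Complex.normSq_nonneg _
  have hw₂n : ∀ i, 0 ≤ w₂ i := fun i => Complex.normSq_nonneg _
  set f₁ : ℝ → ℝ := fun t => ∑ i, w₁ i * (l₁ i / (l₁ i + t) * t ^ (s-1)) with hf₁
  set f₂ : ℝ → ℝ := fun t => ∑ i, w₂ i * (l₂ i / (l₂ i + t) * t ^ (s-1)) with hf₂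
  have hint₁ : IntegrableOn f₁ (Ioi (0:ℝ)) :=
    integrable_finset_sum _ fun i _ => (kernel_integrableOn hs0 hs1 (hl₁n i)).const_mul _
  have hint₂ : IntegrableOn f₂ (Ioi (0:ℝ)) :=
    integrable_finset_sum _ fun i _ => (kernel_integrableOn hs0 hs1 (hl₂n i)).const_mul _
  have hval : ∀ (l w : Fin n → ℝ), (∀ i, 0 ≤ l i) →
      (∫ t in Ioi (0:ℝ), ∑ i, w i * (l i / (l i + t) * t ^ (s-1)))
        = Cs s * ∑ i, l i ^ s * w i := by
    intro l w hl
    rw [integral_finset_sum _ (fun i _ => (kernel_integrableOn hs0 hs1 (hl i)).const_mul _)]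
    have h1 : ∀ i, (∫ t in Ioi (0:ℝ), w i * (l i / (l i + t) * t ^ (s-1)))
        = w i * (Cs s * l i ^ s) := by
      intro i
      rw [MeasureTheory.integral_const_mul, kernel_integral hs0 hs1 (hl i)]
    rw [Finset.sum_congr rfl (fun i _ => h1 i), Finset.mul_sum]
    apply Finset.sum_congr rfl
    intros
    ring
  have hpt : ∀ t ∈ Ioi (0:ℝ), f₁ t ≤ f₂ t := by
    intro t ht
    have ht0 : (0:ℝ) < t := ht
    have hpsd := resolvent_diff_psd hA₁ hA₂ hd ht0
    have h0 := (posSemidef_iff_dotProduct_mulVec.mp hpsd).2 x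
    rw [Matrix.sub_mulVec, dotProduct_sub, quadForm, quadForm, ← Complex.ofReal_sub,
      Complex.zero_le_real, sub_nonneg] at h0
    have hts : 0 ≤ t ^ (s-1) := rpow_nonneg ht0.le _
    calc f₁ t = (∑ i, l₁ i / (l₁ i + t) * w₁ i) * t ^ (s-1) := by
          rw [Finset.sum_mul]
          apply Finset.sum_congr rfl
          intros
          ring
      _ ≤ (∑ i, l₂ i / (l₂ i + t) * w₂ i) * t ^ (s-1) := mul_le_mul_of_nonneg_right h0 hts
      _ = f₂ t := by
          rw [Finset.sum_mul]
          apply Finset.sum_congr rfl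
          intros
          ring
  have hmono := setIntegral_mono_on hint₁ hint₂ measurableSet_Ioi hpt
  rw [hf₁, hf₂] at hmono
  rw [hval l₁ w₁ hl₁n, hval l₂ w₂ hl₂n] at hmono
  have hQ := le_of_mul_le_mul_left hmono (Cs_pos hs0 hs1)
  calc ∑ i, l₁ i ^ s * w₁ i ≤ ∑ i, l₂ i ^ s * w₂ i := hQ

lemma psd_trace_nonneg {M : Matrix (Fin n) (Fin n) ℂ} (hM : M.PosSemidef) : 0 ≤ M.trace := by
  rw [Matrix.trace]
  apply Finset.sum_nonneg
  intro i _
  have h := (posSemidef_iff_dotProduct_mulVec.mp hM).2 (Pi.single i 1)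
  simpa [Matrix.mulVec_single, dotProduct, Pi.single_apply, apply_ite,
    Finset.sum_ite_eq] using h

lemma trace_mul_psd_nonneg {X Y : Matrix (Fin n) (Fin n) ℂ}
    (hX : X.PosSemidef) (hY : Y.PosSemidef) : 0 ≤ (X * Y).trace := by
  have h : X * Y = (X * hY.sqrt) * hY.sqrt := by rw [mul_assoc, hY.sqrt_mul_self]
  rw [h, Matrix.trace_mul_comm, ← mul_assoc]
  have hpsd : (hY.sqrt * X * hY.sqrt).PosSemidef := by
    have := hX.conjTranspose_mul_mul_same hY.sqrt
    rwa [hY.posSemidef_sqrt.1.eq] at this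
  exact psd_trace_nonneg hpsd

end LH


/-- Monotonicity lemma: for positive semidefinite `A₁ ≤ A₂` and `E ≤ P`, and `0 < s < 1`,
`Tr(A₂^s E^(1-s)) - Tr(A₁^s E^(1-s)) ≤ Tr(A₂^s P^(1-s)) - Tr(A₁^s P^(1-s))`. -/
theorem trace_rpow_mul_rpow_sub_mono
    {n : ℕ} {A₁ A₂ E P : Matrix (Fin n) (Fin n) ℂ}
    (hA₁ : A₁.PosSemidef) (hA₂ : A₂.PosSemidef)
    (hE : E.PosSemidef) (hP : P.PosSemidef)
    (hA : (A₂ - A₁).PosSemidef) (hEP : (P - E).PosSemidef)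
    (s : ℝ) (hs0 : 0 < s) (hs1 : s < 1) :
    (hermPow hA₂.1 s * hermPow hE.1 (1 - s)).trace
        - (hermPow hA₁.1 s * hermPow hE.1 (1 - s)).trace
      ≤ (hermPow hA₂.1 s * hermPow hP.1 (1 - s)).trace
        - (hermPow hA₁.1 s * hermPow hP.1 (1 - s)).trace := by
  have hs0' : 0 < 1 - s := by linarith
  have hs1' : 1 - s < 1 := by linarith
  have hX := LH.rpow_mono hA₁ hA₂ hA hs0 hs1
  have hY := LH.rpow_mono hE hP hEP hs0' hs1'
  have htr := LH.trace_mul_psd_nonneg hX hY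
  rw [← sub_nonneg]
  have hexp : ((hA₂.1.cfc fun x : ℝ => x ^ s) - hA₁.1.cfc fun x : ℝ => x ^ s) *
        ((hP.1.cfc fun x : ℝ => x ^ (1-s)) - hE.1.cfc fun x : ℝ => x ^ (1-s)) =
      (hermPow hA₂.1 s * hermPow hP.1 (1-s) - hermPow hA₁.1 s * hermPow hP.1 (1-s))
        - (hermPow hA₂.1 s * hermPow hE.1 (1-s) - hermPow hA₁.1 s * hermPow hE.1 (1-s)) := by
    show (hermPow hA₂.1 s - hermPow hA₁.1 s) * (hermPow hP.1 (1-s) - hermPow hE.1 (1-s)) = _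
    rw [Matrix.sub_mul, Matrix.mul_sub, Matrix.mul_sub]
    abel
  rw [hexp] at htr
  simpa [Matrix.trace_sub] using htr
end

section
/- For every real number t ≥ 0 and every real number s with 0 < s < 1, one has t^s = (sin(s·π)/π) · ∫₀^∞ λ^(s−1) · t/(t + λ) dλ, where the integral is taken over λ ∈ (0, ∞) with respect to Lebesgue measure (for t = 0 both sides are 0). -/
open MeasureTheory Set Real

lemma beta_val {s : ℝ} (hs0 : 0 < s) (hs1 : s < 1) :
    ∫ x in Ioo (0:ℝ) 1, x ^ (s - 1) * (1 - x) ^ (-s) = π / Real.sin (π * s) := by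
  have hres : (0:ℝ) < Complex.re s := by simpa using hs0
  have hres' : (0:ℝ) < Complex.re (1 - (s:ℂ)) := by simp [sub_pos]; simpa using hs1
  have hB := Complex.Gamma_mul_Gamma_eq_betaIntegral hres hres'
  rw [show (s:ℂ) + (1 - s) = 1 by ring, Complex.Gamma_one, one_mul,
    Complex.Gamma_mul_Gamma_one_sub] at hB
  have h1 : ∫ x in Ioo (0:ℝ) 1, x ^ (s - 1) * (1 - x) ^ (-s)
      = ∫ x in (0:ℝ)..1, x ^ (s - 1) * (1 - x) ^ (-s) := by
    rw [intervalIntegral.integral_of_le (by norm_num : (0:ℝ) ≤ 1),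
      integral_Ioc_eq_integral_Ioo]
  have key : Complex.betaIntegral s (1 - s)
      = ((∫ x in Ioo (0:ℝ) 1, x ^ (s - 1) * (1 - x) ^ (-s) : ℝ) : ℂ) := by
    rw [h1, Complex.betaIntegral, ← intervalIntegral.integral_ofReal]
    apply intervalIntegral.integral_congr
    intro x hx
    rw [Set.uIcc_of_le (by norm_num : (0:ℝ) ≤ 1)] at hx
    have hx0 : (0:ℝ) ≤ x := hx.1
    have hx1 : (0:ℝ) ≤ 1 - x := by linarith [hx.2]
    simp only [Complex.ofReal_mul, Complex.ofReal_cpow hx0, Complex.ofReal_cpow hx1]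
    push_cast
    ring_nf
  rw [key] at hB
  have hsin : Complex.sin (π * s) = (Real.sin (π * s) : ℂ) := by
    norm_cast
  rw [hsin] at hB
  have := hB.symm
  rw [show ((π:ℂ) / (Real.sin (π*s) : ℂ)) = ((π / Real.sin (π*s) : ℝ) : ℂ) by push_cast; ring] at this
  exact_mod_cast this

lemma J_val {s : ℝ} (hs0 : 0 < s) (hs1 : s < 1) :
    ∫ x in Ioi (0:ℝ), x ^ (s - 1) * (1 + x)⁻¹ = π / Real.sin (π * s) := by
  have himg : (fun u => u / (1 - u)) '' Ioo (0:ℝ) 1 = Ioi 0 := by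
    ext y
    simp only [mem_image, mem_Ioo, mem_Ioi]
    constructor
    · rintro ⟨u, ⟨hu0, hu1⟩, rfl⟩
      exact div_pos hu0 (by linarith)
    · intro hy
      refine ⟨y / (1 + y), ⟨div_pos hy (by linarith), ?_⟩, ?_⟩
      · rw [div_lt_one (by linarith)]; linarith
      · field_simp; ring
  have hderiv : ∀ x ∈ Ioo (0:ℝ) 1, HasDerivWithinAt (fun u => u / (1 - u))
      (((1 - x) ^ 2)⁻¹) (Ioo (0:ℝ) 1) x := by
    intro x hx
    have h1x : (1:ℝ) - x ≠ 0 := by rw [mem_Ioo] at hx; intro h; linarith [hx.2]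
    have := (hasDerivAt_id x).div ((hasDerivAt_id x).const_sub 1) h1x
    refine this.hasDerivWithinAt.congr_deriv ?_
    simp only [id]
    ring
  have hinj : InjOn (fun u => u / (1 - u)) (Ioo (0:ℝ) 1) := by
    intro a ha b hb hab
    rw [mem_Ioo] at ha hb
    simp only at hab
    have h1 : (1:ℝ) - a ≠ 0 := by intro h; linarith [ha.2]
    have h2 : (1:ℝ) - b ≠ 0 := by intro h; linarith [hb.2]
    field_simp at hab
    linarith
  rw [← himg, integral_image_eq_integral_abs_deriv_smul measurableSet_Ioo hderiv hinj]
  rw [← beta_val hs0 hs1]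
  apply setIntegral_congr_fun measurableSet_Ioo
  intro x hx
  rw [mem_Ioo] at hx
  have h1x : (0:ℝ) < 1 - x := by linarith [hx.2]
  simp only [smul_eq_mul]
  rw [abs_of_nonneg (by positivity),
    show (1:ℝ) + x / (1 - x) = (1 - x)⁻¹ by field_simp; ring, inv_inv,
    Real.div_rpow hx.1.le h1x.le, Real.rpow_sub h1x, Real.rpow_neg h1x.le,
    Real.rpow_one]
  field_simp

/-- Integral representation of the power function: for `t ≥ 0` and `0 < s < 1`,
`t^s = (sin(sπ)/π) ∫₀^∞ λ^(s-1) t/(t+λ) dλ`. -/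
theorem rpow_eq_sin_mul_integral
    (t : ℝ) (ht : 0 ≤ t) (s : ℝ) (hs0 : 0 < s) (hs1 : s < 1) :
    t ^ s = (Real.sin (s * Real.pi) / Real.pi)
      * ∫ lam in Set.Ioi (0 : ℝ), lam ^ (s - 1) * (t / (t + lam)) := by
  rcases ht.eq_or_lt with h | h
  · simp [← h, Real.zero_rpow hs0.ne']
  · have hscale := integral_comp_mul_left_Ioi
      (fun y => y ^ (s - 1) * (t / (t + y))) 0 h
    rw [mul_zero] at hscale
    simp only [smul_eq_mul] at hscale
    have hint : ∫ lam in Ioi (0:ℝ), lam ^ (s - 1) * (t / (t + lam))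
        = t ^ s * (π / Real.sin (π * s)) := by
      have : (∫ x in Ioi (0:ℝ), (t * x) ^ (s - 1) * (t / (t + t * x)))
          = t ^ (s - 1) * ∫ x in Ioi (0:ℝ), x ^ (s - 1) * (1 + x)⁻¹ := by
        rw [← integral_const_mul]
        apply setIntegral_congr_fun measurableSet_Ioi
        intro x hx
        rw [mem_Ioi] at hx
        dsimp only
        rw [Real.mul_rpow h.le hx.le]
        have h1 : t + t * x ≠ 0 := by positivity
        have h2 : (1:ℝ) + x ≠ 0 := by positivity
        field_simp
      rw [this, J_val hs0 hs1] at hscale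
      have hts : t * t ^ (s - 1) = t ^ s := by
        have h2 := Real.rpow_add h 1 (s - 1)
        rw [Real.rpow_one] at h2
        rw [← h2]
        norm_num
      have hI : (∫ x in Ioi (0:ℝ), x ^ (s - 1) * (t / (t + x)))
          = t * (t ^ (s - 1) * (π / Real.sin (π * s))) := by
        rw [hscale]
        rw [← mul_assoc, mul_inv_cancel₀ h.ne', one_mul]
      rw [hI, ← mul_assoc, hts]
    rw [hint]
    have hsin : Real.sin (π * s) ≠ 0 := by
      apply ne_of_gt
      apply Real.sin_pos_of_pos_of_lt_pi (by positivity)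
      nlinarith [Real.pi_pos]
    rw [mul_comm s π]
    field_simp
end
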